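/- Almost sure convergence of products of random stochastic matrices: Let X(1) be a random d × d row-stochastic matrix and {X(n)} an i.i.d. sequence with the same law. Suppose there exists m < ∞ such that P(X(m)X(m−1)⋯X(1) has all entries positive) > 0. Then there exists a random element W of the simplex S_d such that X(n)X(n−1)⋯X(1) converges almost surely, as n → ∞, to the d × d matrix all of whose rows equal W. -/

import Mathlib

open MeasureTheory ProbabilityTheory Filter

noncomputable instance {d : ℕ} : MeasurableSpace (Matrix (Fin d) (Fin d) ℝ) :=
  MeasurableSpace.pi

/-- The left products `X(n,1) = X(n) X(n-1) ⋯ X(1)` (with `X(0,1) := 1`). -/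
def leftProd {Ω : Type*} {d : ℕ}
    (X : ℕ → Ω → Matrix (Fin d) (Fin d) ℝ) : ℕ → Ω → Matrix (Fin d) (Fin d) ℝ
  | 0 => fun _ => 1
  | n + 1 => fun ω => X (n + 1) ω * leftProd X n ω

namespace StochasticAux

variable {d : ℕ}

/-- Row-stochastic matrix. -/
def IsStoch (A : Matrix (Fin d) (Fin d) ℝ) : Prop :=
  (∀ i j, 0 ≤ A i j) ∧ ∀ i, ∑ j, A i j = 1

lemma isStoch_one : IsStoch (1 : Matrix (Fin d) (Fin d) ℝ) := by
  constructor
  · intro i j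
    by_cases h : i = j <;> simp [Matrix.one_apply, h]
  · intro i
    simp [Matrix.one_apply]

lemma IsStoch.mul {A B : Matrix (Fin d) (Fin d) ℝ} (hA : IsStoch A) (hB : IsStoch B) :
    IsStoch (A * B) := by
  constructor
  · intro i j
    rw [Matrix.mul_apply]
    exact Finset.sum_nonneg fun k _ => mul_nonneg (hA.1 i k) (hB.1 k j)
  · intro i
    simp only [Matrix.mul_apply]
    rw [Finset.sum_comm]
    calc ∑ k, ∑ j, A i k * B k j = ∑ k, A i k * ∑ j, B k j := by
          simp [Finset.mul_sum]
      _ = 1 := by simp [hB.2, hA.2 i]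

lemma IsStoch.le_one {A : Matrix (Fin d) (Fin d) ℝ} (hA : IsStoch A) (i j : Fin d) :
    A i j ≤ 1 := by
  rw [← hA.2 i]
  exact Finset.single_le_sum (fun k _ => hA.1 i k) (Finset.mem_univ j)

/-- Product `v (n-1) * ⋯ * v 0`. -/
def pprod : ℕ → (ℕ → Matrix (Fin d) (Fin d) ℝ) → Matrix (Fin d) (Fin d) ℝ
  | 0, _ => 1
  | n + 1, v => v n * pprod n v

lemma pprod_congr {n : ℕ} {v w : ℕ → Matrix (Fin d) (Fin d) ℝ}
    (h : ∀ t < n, v t = w t) : pprod n v = pprod n w := by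
  induction n with
  | zero => rfl
  | succ n ih =>
    rw [pprod, pprod, h n (Nat.lt_succ_self n),
      ih (fun t ht => h t (ht.trans (Nat.lt_succ_self n)))]

lemma isStoch_pprod {n : ℕ} {v : ℕ → Matrix (Fin d) (Fin d) ℝ}
    (h : ∀ t, IsStoch (v t)) : IsStoch (pprod n v) := by
  induction n with
  | zero => exact isStoch_one
  | succ n ih => exact (h n).mul ih

lemma leftProd_add {Ω : Type*} (X : ℕ → Ω → Matrix (Fin d) (Fin d) ℝ) (a b : ℕ) (ω : Ω) :
    leftProd X (a + b) ω = pprod b (fun t => X (a + t + 1) ω) * leftProd X a ω := by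
  induction b with
  | zero => simp [pprod]
  | succ b ih =>
    have h1 : leftProd X (a + (b + 1)) ω = X (a + b + 1) ω * leftProd X (a + b) ω := rfl
    rw [h1, ih, pprod, mul_assoc]

lemma isStoch_leftProd {Ω : Type*} {X : ℕ → Ω → Matrix (Fin d) (Fin d) ℝ}
    (h : ∀ n ω, IsStoch (X n ω)) (n : ℕ) (ω : Ω) : IsStoch (leftProd X n ω) := by
  induction n with
  | zero => exact isStoch_one
  | succ n ih => exact (h (n + 1) ω).mul ih

lemma measurable_matrix_mul {α : Type*} [MeasurableSpace α]
    {f g : α → Matrix (Fin d) (Fin d) ℝ} (hf : Measurable f) (hg : Measurable g) :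
    Measurable (fun x => f x * g x) := by
  apply measurable_pi_lambda
  intro i
  apply measurable_pi_lambda
  intro j
  show Measurable fun x => ∑ k, f x i k * g x k j
  apply Finset.measurable_sum
  intro k _
  exact ((measurable_pi_apply k).comp ((measurable_pi_apply i).comp hf)).mul
    ((measurable_pi_apply j).comp ((measurable_pi_apply k).comp hg))

lemma measurable_eval (i j : Fin d) :
    Measurable (fun A : Matrix (Fin d) (Fin d) ℝ => A i j) :=
  (measurable_pi_apply j).comp (measurable_pi_apply i)

lemma measurable_pprod (n : ℕ) :
    Measurable (fun v : ℕ → Matrix (Fin d) (Fin d) ℝ => pprod n v) := by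
  induction n with
  | zero => exact measurable_const
  | succ n ih => exact measurable_matrix_mul (measurable_pi_apply n) ih

section ColBounds

variable [NeZero d]

/-- Minimum of column `j`. -/
noncomputable def colMin (A : Matrix (Fin d) (Fin d) ℝ) (j : Fin d) : ℝ :=
  Finset.univ.inf' Finset.univ_nonempty (fun i => A i j)

/-- Maximum of column `j`. -/
noncomputable def colMax (A : Matrix (Fin d) (Fin d) ℝ) (j : Fin d) : ℝ :=
  Finset.univ.sup' Finset.univ_nonempty (fun i => A i j)

lemma colMin_le (A : Matrix (Fin d) (Fin d) ℝ) (i : Fin d) (j : Fin d) :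
    colMin A j ≤ A i j := Finset.inf'_le _ (Finset.mem_univ i)

lemma le_colMax (A : Matrix (Fin d) (Fin d) ℝ) (i : Fin d) (j : Fin d) :
    A i j ≤ colMax A j := Finset.le_sup' (fun i => A i j) (Finset.mem_univ i)

lemma le_colMin {A : Matrix (Fin d) (Fin d) ℝ} {j : Fin d} {x : ℝ}
    (h : ∀ i, x ≤ A i j) : x ≤ colMin A j := Finset.le_inf' _ _ fun i _ => h i

lemma colMax_le {A : Matrix (Fin d) (Fin d) ℝ} {j : Fin d} {x : ℝ}
    (h : ∀ i, A i j ≤ x) : colMax A j ≤ x := Finset.sup'_le _ _ fun i _ => h i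

lemma colMin_le_colMax (A : Matrix (Fin d) (Fin d) ℝ) (j : Fin d) :
    colMin A j ≤ colMax A j :=
  le_trans (colMin_le A (Classical.arbitrary _) j) (le_colMax A _ j)

lemma colMin_le_mul {A : Matrix (Fin d) (Fin d) ℝ} (hA : IsStoch A)
    (B : Matrix (Fin d) (Fin d) ℝ) (i j : Fin d) :
    colMin B j ≤ (A * B) i j := by
  rw [Matrix.mul_apply]
  calc colMin B j = ∑ k, A i k * colMin B j := by
        rw [← Finset.sum_mul, hA.2 i, one_mul]
    _ ≤ ∑ k, A i k * B k j :=
        Finset.sum_le_sum fun k _ => mul_le_mul_of_nonneg_left (colMin_le B k j) (hA.1 i k)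

lemma mul_le_colMax {A : Matrix (Fin d) (Fin d) ℝ} (hA : IsStoch A)
    (B : Matrix (Fin d) (Fin d) ℝ) (i j : Fin d) :
    (A * B) i j ≤ colMax B j := by
  rw [Matrix.mul_apply]
  calc ∑ k, A i k * B k j ≤ ∑ k, A i k * colMax B j :=
        Finset.sum_le_sum fun k _ => mul_le_mul_of_nonneg_left (le_colMax B k j) (hA.1 i k)
    _ = colMax B j := by rw [← Finset.sum_mul, hA.2 i, one_mul]

lemma colMin_mul_mono {A : Matrix (Fin d) (Fin d) ℝ} (hA : IsStoch A)
    (B : Matrix (Fin d) (Fin d) ℝ) (j : Fin d) :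
    colMin B j ≤ colMin (A * B) j :=
  le_colMin fun i => colMin_le_mul hA B i j

lemma colMax_mul_mono {A : Matrix (Fin d) (Fin d) ℝ} (hA : IsStoch A)
    (B : Matrix (Fin d) (Fin d) ℝ) (j : Fin d) :
    colMax (A * B) j ≤ colMax B j :=
  colMax_le fun i => mul_le_colMax hA B i j

/-- Dobrushin-type contraction for a matrix with entries bounded below by `δ`. -/
lemma osc_mul_le {A : Matrix (Fin d) (Fin d) ℝ} (hA : IsStoch A) {δ : ℝ}
    (hδ : ∀ i k, δ ≤ A i k) (B : Matrix (Fin d) (Fin d) ℝ) (j : Fin d) :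
    colMax (A * B) j - colMin (A * B) j ≤ (1 - d * δ) * (colMax B j - colMin B j) := by
  have key : ∀ i i', (A * B) i j - (A * B) i' j ≤ (1 - d * δ) * (colMax B j - colMin B j) := by
    intro i i'
    have h1 : (A * B) i j - (A * B) i' j
        = ∑ k, (A i k - A i' k) * (B k j - colMin B j) := by
      simp only [Matrix.mul_apply, sub_mul, mul_sub, Finset.sum_sub_distrib]
      rw [← Finset.sum_mul, ← Finset.sum_mul, hA.2 i, hA.2 i']
      ring
    rw [h1]
    calc ∑ k, (A i k - A i' k) * (B k j - colMin B j)
        ≤ ∑ k, (A i k - δ) * (colMax B j - colMin B j) := by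
          refine Finset.sum_le_sum fun k _ => ?_
          have h2 : A i k - A i' k ≤ A i k - δ := by linarith [hδ i' k]
          have h3 : 0 ≤ B k j - colMin B j := by linarith [colMin_le B k j]
          have h4 : B k j - colMin B j ≤ colMax B j - colMin B j := by
            linarith [le_colMax B k j]
          have h5 : 0 ≤ A i k - δ := by linarith [hδ i k]
          calc (A i k - A i' k) * (B k j - colMin B j)
              ≤ (A i k - δ) * (B k j - colMin B j) :=
                mul_le_mul_of_nonneg_right h2 h3
            _ ≤ (A i k - δ) * (colMax B j - colMin B j) :=
                mul_le_mul_of_nonneg_left h4 h5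
      _ = (1 - d * δ) * (colMax B j - colMin B j) := by
          rw [← Finset.sum_mul, Finset.sum_sub_distrib, hA.2 i]
          simp [Finset.card_univ]
  obtain ⟨i₀, -, h₀⟩ := Finset.exists_mem_eq_sup' (Finset.univ_nonempty (α := Fin d))
    (fun i => (A * B) i j)
  obtain ⟨i₁, -, h₁⟩ := Finset.exists_mem_eq_inf' (Finset.univ_nonempty (α := Fin d))
    (fun i => (A * B) i j)
  rw [colMax, colMin, h₀, h₁]
  exact key i₀ i₁

/-- Deterministic convergence: a sequence of stochastic matrices with monotone column
bounds and frequent contractions converges to a rank-one matrix. -/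
lemma det_conv {P : ℕ → Matrix (Fin d) (Fin d) ℝ}
    (hP0 : ∀ n i j, 0 ≤ P n i j) (hP1 : ∀ n i j, P n i j ≤ 1)
    (hPsum : ∀ n i, ∑ j, P n i j = 1)
    (hmono : ∀ j, Monotone (fun n => colMin (P n) j))
    (hanti : ∀ j, Antitone (fun n => colMax (P n) j))
    {c : ℝ} (hc0 : 0 ≤ c) (hc1 : c < 1)
    (hcon : ∀ N, ∃ n, N ≤ n ∧ ∃ n', n < n' ∧ ∀ j,
      colMax (P n') j - colMin (P n') j ≤ c * (colMax (P n) j - colMin (P n) j)) :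
    ∃ w : Fin d → ℝ, w ∈ stdSimplex ℝ (Fin d) ∧
      Tendsto P atTop (nhds (Matrix.of fun _ j => w j)) := by
  set mn : Fin d → ℕ → ℝ := fun j n => colMin (P n) j with hmn
  set Mx : Fin d → ℕ → ℝ := fun j n => colMax (P n) j with hMx
  have hmle : ∀ j n i, mn j n ≤ P n i j := fun j n i => colMin_le _ i j
  have hMge : ∀ j n i, P n i j ≤ Mx j n := fun j n i => le_colMax _ i j
  have hmM : ∀ j n, mn j n ≤ Mx j n := fun j n => colMin_le_colMax _ j
  have hm0 : ∀ j n, 0 ≤ mn j n := fun j n => le_colMin fun i => hP0 n i j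
  have hM1 : ∀ j n, Mx j n ≤ 1 := fun j n => colMax_le fun i => hP1 n i j
  have osc_pow : ∀ r : ℕ, ∃ n, ∀ j, Mx j n - mn j n ≤ c ^ r := by
    intro r
    induction r with
    | zero => exact ⟨0, fun j => by simpa using sub_le_sub (hM1 j 0) (hm0 j 0)⟩
    | succ r ih =>
      obtain ⟨n, hn⟩ := ih
      obtain ⟨n₁, hn₁, n₂, hn₂, hcontr⟩ := hcon n
      refine ⟨n₂, fun j => ?_⟩
      have h1 : Mx j n₁ - mn j n₁ ≤ Mx j n - mn j n :=
        sub_le_sub (hanti j hn₁) (hmono j hn₁)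
      calc Mx j n₂ - mn j n₂ ≤ c * (Mx j n₁ - mn j n₁) := hcontr j
        _ ≤ c * (c ^ r) := by
            apply mul_le_mul_of_nonneg_left _ hc0
            exact le_trans h1 (hn j)
        _ = c ^ (r + 1) := by ring
  have osc_anti : ∀ j, Antitone (fun n => Mx j n - mn j n) :=
    fun j a b hab => sub_le_sub (hanti j hab) (hmono j hab)
  have osc_to_zero : ∀ j, Tendsto (fun n => Mx j n - mn j n) atTop (nhds 0) := by
    intro j
    rw [Metric.tendsto_atTop]
    intro ε hε
    obtain ⟨r, hr⟩ := exists_pow_lt_of_lt_one hε hc1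
    obtain ⟨n, hn⟩ := osc_pow r
    refine ⟨n, fun k hk => ?_⟩
    have h1 : Mx j k - mn j k ≤ Mx j n - mn j n := osc_anti j hk
    have h2 : 0 ≤ Mx j k - mn j k := sub_nonneg.2 (hmM j k)
    rw [Real.dist_eq, sub_zero, abs_of_nonneg h2]
    exact lt_of_le_of_lt (le_trans h1 (hn j)) hr
  set w : Fin d → ℝ := fun j => ⨆ n, mn j n with hw
  have hbdd : ∀ j, BddAbove (Set.range (mn j)) := fun j =>
    ⟨1, by rintro x ⟨n, rfl⟩; exact le_trans (hmM j n) (hM1 j n)⟩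
  have hmlim : ∀ j, Tendsto (mn j) atTop (nhds (w j)) := fun j =>
    tendsto_atTop_ciSup (hmono j) (hbdd j)
  have hMlim : ∀ j, Tendsto (Mx j) atTop (nhds (w j)) := by
    intro j
    have := Tendsto.add (hmlim j) (osc_to_zero j)
    simpa using this
  have hentry : ∀ i j, Tendsto (fun n => P n i j) atTop (nhds (w j)) := fun i j =>
    tendsto_of_tendsto_of_tendsto_of_le_of_le (hmlim j) (hMlim j)
      (fun n => hmle j n i) (fun n => hMge j n i)
  refine ⟨w, ⟨fun j => le_of_tendsto_of_tendsto' (tendsto_const_nhds) (hmlim j)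
      (fun n => hm0 j n), ?_⟩, ?_⟩
  · have i0 : Fin d := Classical.arbitrary _
    have hsum : Tendsto (fun n => ∑ j, P n i0 j) atTop (nhds (∑ j, w j)) :=
      tendsto_finset_sum _ fun j _ => hentry i0 j
    have hsum1 : Tendsto (fun n => ∑ j, P n i0 j) atTop (nhds 1) := by
      simpa [hPsum] using (tendsto_const_nhds : Tendsto (fun _ : ℕ => (1:ℝ)) atTop (nhds 1))
    exact tendsto_nhds_unique hsum hsum1
  · refine tendsto_pi_nhds.2 ?_
    intro i
    rw [tendsto_pi_nhds]
    intro j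
    exact hentry i j

end ColBounds

end StochasticAux

open StochasticAux

/-- A.s. convergence of left products of i.i.d. random stochastic matrices to
a matrix with identical rows, given that some finite left product is
entrywise positive with positive probability. -/
theorem leftProd_tendsto_rank_one
    {Ω : Type*} [MeasureSpace Ω] [IsProbabilityMeasure (ℙ : Measure Ω)]
    {d : ℕ} (hd : 0 < d)
    (X : ℕ → Ω → Matrix (Fin d) (Fin d) ℝ)
    (hmeas : ∀ n, Measurable (X n))
    (hiid : iIndepFun X ℙ)
    (hident : ∀ n, Measure.map (X n) ℙ = Measure.map (X 0) ℙ)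
    (hstoch : ∀ n ω, (∀ i j, 0 ≤ X n ω i j) ∧ ∀ i, ∑ j, X n ω i j = 1)
    (hpos : ∃ m, 0 < ℙ {ω | ∀ i j, 0 < leftProd X m ω i j}) :
    ∃ W : Ω → Fin d → ℝ,
      (∀ᵐ ω ∂ℙ, W ω ∈ stdSimplex ℝ (Fin d)) ∧
      ∀ᵐ ω ∂ℙ, Tendsto (fun n => leftProd X n ω) atTop
        (nhds (Matrix.of fun _ j => W ω j)) := by
  classical
  have hstoch' : ∀ n ω, IsStoch (X n ω) := hstoch
  haveI : NeZero d := ⟨hd.ne'⟩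
  by_cases hd1 : d = 1
  · -- trivial one-dimensional case
    subst hd1
    refine ⟨fun _ _ => 1, ?_, ?_⟩
    · refine Eventually.of_forall fun ω => ⟨fun j => one_pos.le, by simp⟩
    · refine Eventually.of_forall fun ω => ?_
      have hall : ∀ n, leftProd X n ω = Matrix.of fun _ _ => (1 : ℝ) := by
        intro n
        have hs := isStoch_leftProd hstoch' n ω
        ext i j
        have h1 := hs.2 i
        rw [Fin.sum_univ_one] at h1
        have hi : i = 0 := Subsingleton.elim _ _
        have hj : j = 0 := Subsingleton.elim _ _
        subst hi; subst hj
        simpa using h1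
      simp only [hall]
      exact tendsto_const_nhds
  -- main case : `d ≥ 2`
  have hd2 : 2 ≤ d := by omega
  obtain ⟨m, hm⟩ := hpos
  have hm0 : 0 < m := by
    rcases Nat.eq_zero_or_pos m with h0 | h
    · exfalso
      subst h0
      have hempty : {ω | ∀ i j, 0 < leftProd X 0 ω i j} = ∅ := by
        ext ω
        simp only [Set.mem_setOf_eq, Set.mem_empty_iff_false, iff_false, not_forall]
        refine ⟨⟨0, hd⟩, ⟨1, by omega⟩, ?_⟩
        have h01 : leftProd X 0 ω (⟨0, hd⟩ : Fin d) (⟨1, by omega⟩ : Fin d) = 0 := by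
          show (1 : Matrix (Fin d) (Fin d) ℝ) _ _ = 0
          rw [Matrix.one_apply_ne]
          intro hcon
          have := congrArg Fin.val hcon
          simp at this
        rw [h01]
        exact lt_irrefl 0
      rw [hempty] at hm
      simp at hm
    · exact h
  -- extract a uniform lower bound δ with positive probability
  have hcover : {ω | ∀ i j, 0 < leftProd X m ω i j}
      ⊆ ⋃ n : ℕ, {ω | ∀ i j, 1 / (n + 1 : ℝ) ≤ leftProd X m ω i j} := by
    intro ω hω
    have hne : (Finset.univ : Finset (Fin d × Fin d)).Nonempty := Finset.univ_nonempty
    set ε := Finset.univ.inf' hne (fun p : Fin d × Fin d => leftProd X m ω p.1 p.2) with hε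
    have hεpos : 0 < ε := by
      rw [hε, Finset.lt_inf'_iff]
      exact fun p _ => hω p.1 p.2
    obtain ⟨n, hn⟩ := exists_nat_one_div_lt hεpos
    refine Set.mem_iUnion.2 ⟨n, fun i j => ?_⟩
    exact le_trans hn.le (Finset.inf'_le _ (Finset.mem_univ (i, j)))
  have hex : ∃ n : ℕ, 0 < ℙ {ω | ∀ i j, 1 / (n + 1 : ℝ) ≤ leftProd X m ω i j} := by
    by_contra hcon
    push_neg at hcon
    have h0 : ℙ (⋃ n : ℕ, {ω | ∀ i j, 1 / (n + 1 : ℝ) ≤ leftProd X m ω i j}) = 0 :=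
      measure_iUnion_null fun n => le_antisymm (hcon n) zero_le
    have := lt_of_lt_of_le hm (measure_mono hcover)
    rw [h0] at this
    exact lt_irrefl 0 this
  obtain ⟨nδ, hδpos⟩ := hex
  set δ : ℝ := 1 / (nδ + 1 : ℝ) with hδdef
  have hδ0 : 0 < δ := by rw [hδdef]; positivity
  -- block products
  set Z : ℕ → Ω → Matrix (Fin d) (Fin d) ℝ :=
    fun k ω => pprod m (fun t => X (k * m + t + 1) ω) with hZ
  set PosSet : Set (Matrix (Fin d) (Fin d) ℝ) := {A | ∀ i j, δ ≤ A i j} with hPosSet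
  have hPosMeas : MeasurableSet PosSet := by
    have hps : PosSet = ⋂ i, ⋂ j, (fun A : Matrix (Fin d) (Fin d) ℝ => A i j) ⁻¹' Set.Ici δ := by
      ext A
      simp [hPosSet, Set.mem_iInter]
    rw [hps]
    exact MeasurableSet.iInter fun i => MeasurableSet.iInter fun j =>
      (measurable_eval i j) measurableSet_Ici
  have hZmeas : ∀ k, Measurable (Z k) :=
    fun k => (measurable_pprod m).comp (measurable_pi_lambda _ fun t => hmeas _)
  set E : ℕ → Set Ω := fun k => Z k ⁻¹' PosSet with hE
  have hEmeas : ∀ k, MeasurableSet (E k) := fun k => hZmeas k hPosMeas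
  -- the tuple of a block and its law
  set tuple : ℕ → Ω → (Fin m → Matrix (Fin d) (Fin d) ℝ) :=
    fun k ω t => X (k * m + t + 1) ω with htuple
  have htuplemeas : ∀ k, Measurable (tuple k) :=
    fun k => measurable_pi_lambda _ fun t => hmeas _
  haveI : IsProbabilityMeasure (Measure.map (X 0) ℙ) := Measure.isProbabilityMeasure_map (hmeas 0).aemeasurable
  have hlaw : ∀ k, Measure.map (tuple k) ℙ = Measure.pi (fun _ : Fin m => Measure.map (X 0) ℙ) := by
    intro k
    refine (Measure.pi_eq ?_).symm
    intro s hs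
    rw [Measure.map_apply (htuplemeas k) (MeasurableSet.univ_pi hs)]
    have hpre : tuple k ⁻¹' Set.pi Set.univ s = ⋂ t : Fin m, X (k * m + t + 1) ⁻¹' s t := by
      ext ω
      simp [htuple, Set.mem_pi]
    rw [hpre]
    set f : Fin m → ℕ := fun t => k * m + t + 1 with hf
    have hfinj : Function.Injective f := by
      intro t t' h
      simp only [hf] at h
      exact Fin.ext (by omega)
    set S : Finset ℕ := Finset.image f Finset.univ with hS
    set sets : ℕ → Set (Matrix (Fin d) (Fin d) ℝ) :=
      fun i => if h : i - (k * m + 1) < m then s ⟨i - (k * m + 1), h⟩ else Set.univ with hsets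
    have hsets_f : ∀ t : Fin m, sets (f t) = s t := by
      intro t
      have h1 : f t - (k * m + 1) = (t : ℕ) := by simp only [hf]; omega
      have h2 : f t - (k * m + 1) < m := by rw [h1]; exact t.isLt
      simp only [hsets, dif_pos h2]
      have h3 : (⟨f t - (k * m + 1), h2⟩ : Fin m) = t := Fin.ext h1
      rw [h3]
    have hsetsmeas : ∀ i, MeasurableSet (sets i) := by
      intro i
      rw [hsets]
      dsimp only
      split
      · exact hs _
      · exact MeasurableSet.univ
    have hInd := hiid.measure_inter_preimage_eq_mul S (fun i _ => hsetsmeas i)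
    have hL : (⋂ i ∈ S, X i ⁻¹' sets i) = ⋂ t : Fin m, X (f t) ⁻¹' s t := by
      ext ω
      simp only [Set.mem_iInter, hS, Finset.mem_image, Finset.mem_univ, true_and,
        Set.mem_preimage]
      constructor
      · intro h t
        have := h (f t) ⟨t, rfl⟩
        rwa [hsets_f t] at this
      · rintro h i ⟨t, rfl⟩
        rw [hsets_f t]
        exact h t
    rw [hL] at hInd
    rw [hInd, hS, Finset.prod_image (fun a _ b _ h => hfinj h)]
    refine Finset.prod_congr rfl fun t _ => ?_
    rw [hsets_f t, ← Measure.map_apply (hmeas (f t)) (hs t), hident (f t)]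
  -- identification of `E 0` and positivity of its probability
  have hZ0 : ∀ ω, Z 0 ω = leftProd X m ω := by
    intro ω
    have h1 := leftProd_add X 0 m ω
    have h2 : leftProd X 0 ω = 1 := rfl
    rw [h2, mul_one] at h1
    rw [hZ]
    simp only [zero_mul, zero_add] at h1 ⊢
    exact h1.symm
  have hE0 : E 0 = {ω | ∀ i j, δ ≤ leftProd X m ω i j} := by
    ext ω
    simp only [hE, Set.mem_preimage, hPosSet, Set.mem_setOf_eq, hZ0 ω]
  have hE0pos : 0 < ℙ (E 0) := by
    rw [hE0]
    exact hδpos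
  -- the function from a block tuple to the block product
  set gm : (Fin m → Matrix (Fin d) (Fin d) ℝ) → Matrix (Fin d) (Fin d) ℝ :=
    fun v => pprod m (fun t => if h : t < m then v ⟨t, h⟩ else 1) with hgm
  have hgm_meas : Measurable gm := by
    refine (measurable_pprod m).comp (measurable_pi_lambda _ fun t => ?_)
    by_cases h : t < m
    · simp only [dif_pos h]
      exact measurable_pi_apply _
    · simp only [dif_neg h]
      exact measurable_const
  have hgm_tuple : ∀ k ω, gm (tuple k ω) = Z k ω := by
    intro k ω
    refine pprod_congr fun t ht => ?_
    simp only [dif_pos ht, htuple]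
  have hEtuple : ∀ k, E k = tuple k ⁻¹' (gm ⁻¹' PosSet) := by
    intro k
    ext ω
    simp only [hE, Set.mem_preimage, hgm_tuple k ω]
  have hEprob : ∀ k, ℙ (E k) = ℙ (E 0) := by
    intro k
    rw [hEtuple k, hEtuple 0,
      ← Measure.map_apply (htuplemeas k) (hgm_meas hPosMeas),
      ← Measure.map_apply (htuplemeas 0) (hgm_meas hPosMeas), hlaw k, hlaw 0]
  -- independence of the block events
  have block_eq : ∀ {a k t t' : ℕ}, t < m → t' < m → a * m + t = k * m + t' → a = k := by
    intro a k t t' ht ht' h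
    rcases Nat.lt_trichotomy a k with hlt | he | hgt
    · exfalso
      have h2 : (a + 1) * m ≤ k * m := Nat.mul_le_mul_right m hlt
      have h3 : (a + 1) * m = a * m + m := by ring
      omega
    · exact he
    · exfalso
      have h2 : (k + 1) * m ≤ a * m := Nat.mul_le_mul_right m hgt
      have h3 : (k + 1) * m = k * m + m := by ring
      omega
  have hEindep : iIndepSet E ℙ := by
    rw [iIndepSet_iff_meas_biInter hEmeas]
    intro F
    induction F using Finset.induction_on with
    | empty => simp
    | @insert a F' ha ih =>
      set S : Finset ℕ := Finset.image (fun t : Fin m => a * m + t + 1) Finset.univ with hSdef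
      set T : Finset ℕ :=
        F'.biUnion (fun k => Finset.image (fun t : Fin m => k * m + t + 1) Finset.univ) with hTdef
      have hdisj : Disjoint S T := by
        rw [Finset.disjoint_left]
        rintro i hiS hiT
        rw [hSdef, Finset.mem_image] at hiS
        obtain ⟨t, -, rfl⟩ := hiS
        rw [hTdef, Finset.mem_biUnion] at hiT
        obtain ⟨k, hkF, hkim⟩ := hiT
        rw [Finset.mem_image] at hkim
        obtain ⟨t', -, ht'⟩ := hkim
        have hak : a = k := block_eq t.isLt t'.isLt (by omega)
        subst hak
        exact ha hkF
      have hIF := hiid.indepFun_finset S T hdisj hmeas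
      set gS : (∀ _ : (S : Finset ℕ), Matrix (Fin d) (Fin d) ℝ) → Matrix (Fin d) (Fin d) ℝ :=
        fun v => pprod m (fun t => if h : a * m + t + 1 ∈ S then v ⟨a * m + t + 1, h⟩ else 1)
        with hgS
      set gT : ℕ → (∀ _ : (T : Finset ℕ), Matrix (Fin d) (Fin d) ℝ) → Matrix (Fin d) (Fin d) ℝ :=
        fun k v => pprod m (fun t => if h : k * m + t + 1 ∈ T then v ⟨k * m + t + 1, h⟩ else 1)
        with hgT
      have hgSmeas : Measurable gS := by
        refine (measurable_pprod m).comp (measurable_pi_lambda _ fun t => ?_)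
        by_cases h : a * m + t + 1 ∈ S
        · simp only [dif_pos h]
          exact measurable_pi_apply _
        · simp only [dif_neg h]
          exact measurable_const
      have hgTmeas : ∀ k, Measurable (gT k) := by
        intro k
        refine (measurable_pprod m).comp (measurable_pi_lambda _ fun t => ?_)
        by_cases h : k * m + t + 1 ∈ T
        · simp only [dif_pos h]
          exact measurable_pi_apply _
        · simp only [dif_neg h]
          exact measurable_const
      have hgS_eq : ∀ ω, gS (fun i : (S : Finset ℕ) => X i ω) = Z a ω := by
        intro ω
        refine pprod_congr fun t ht => ?_
        have hmem : a * m + t + 1 ∈ S := by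
          rw [hSdef, Finset.mem_image]
          exact ⟨⟨t, ht⟩, Finset.mem_univ _, rfl⟩
        simp only [dif_pos hmem]
      have hgT_eq : ∀ k, k ∈ F' → ∀ ω, gT k (fun i : (T : Finset ℕ) => X i ω) = Z k ω := by
        intro k hk ω
        refine pprod_congr fun t ht => ?_
        have hmem : k * m + t + 1 ∈ T := by
          rw [hTdef, Finset.mem_biUnion]
          exact ⟨k, hk, Finset.mem_image.2 ⟨⟨t, ht⟩, Finset.mem_univ _, rfl⟩⟩
        simp only [dif_pos hmem]
      have hEa : E a = (fun ω (i : (S : Finset ℕ)) => X i ω) ⁻¹' (gS ⁻¹' PosSet) := by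
        ext ω
        simp only [hE, Set.mem_preimage]
        rw [hgS_eq ω]
      have hEF : (⋂ k ∈ F', E k)
          = (fun ω (i : (T : Finset ℕ)) => X i ω) ⁻¹' (⋂ k ∈ F', gT k ⁻¹' PosSet) := by
        ext ω
        simp only [Set.mem_iInter, Set.mem_preimage]
        refine forall₂_congr fun k hk => ?_
        rw [hE]
        simp only [Set.mem_preimage]
        rw [hgT_eq k hk ω]
      have hTmeasSet : MeasurableSet (⋂ k ∈ F', gT k ⁻¹' PosSet) :=
        MeasurableSet.biInter F'.countable_toSet fun k _ => (hgTmeas k) hPosMeas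
      rw [Finset.set_biInter_insert, Finset.prod_insert ha, ← ih, hEa, hEF]
      exact hIF.measure_inter_preimage_eq_mul (gS ⁻¹' PosSet) (⋂ k ∈ F', gT k ⁻¹' PosSet)
        (hgSmeas hPosMeas) hTmeasSet
  -- second Borel-Cantelli
  have hsum : (∑' k, ℙ (E k)) = ⊤ := by
    rw [tsum_congr hEprob]
    exact ENNReal.tsum_const_eq_top_of_ne_zero hE0pos.ne'
  have hBC := ProbabilityTheory.measure_limsup_eq_one hEmeas hEindep hsum
  have hae : ∀ᵐ ω ∂ℙ, ω ∈ limsup E atTop := by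
    rw [ae_iff]
    have hcc : {ω | ¬ω ∈ limsup E atTop} = (limsup E atTop)ᶜ := rfl
    rw [hcc, measure_compl (MeasurableSet.measurableSet_limsup hEmeas) (measure_ne_top _ _), hBC]
    simp
  -- almost sure convergence
  have hmain : ∀ᵐ ω ∂ℙ, ∃ w : Fin d → ℝ, w ∈ stdSimplex ℝ (Fin d) ∧
      Tendsto (fun n => leftProd X n ω) atTop (nhds (Matrix.of fun _ j => w j)) := by
    filter_upwards [hae] with ω hω
    have hfreq : ∃ᶠ k in atTop, ω ∈ E k := mem_limsup_iff_frequently_mem.1 hω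
    set δ' : ℝ := min δ (1 / (d : ℝ)) with hδ'
    have hdpos : (0 : ℝ) < d := by
      have := hd
      positivity
    have hδ'0 : 0 < δ' := lt_min hδ0 (by positivity)
    have hc0 : 0 ≤ 1 - (d : ℝ) * δ' := by
      have h1 : (d : ℝ) * δ' ≤ d * (1 / d) :=
        mul_le_mul_of_nonneg_left (min_le_right _ _) hdpos.le
      rw [mul_one_div_cancel hdpos.ne'] at h1
      linarith
    have hc1 : 1 - (d : ℝ) * δ' < 1 := by
      have h1 : 0 < (d : ℝ) * δ' := mul_pos hdpos hδ'0
      linarith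
    refine det_conv (P := fun n => leftProd X n ω) ?_ ?_ ?_ ?_ ?_ hc0 hc1 ?_
    · exact fun n i j => (isStoch_leftProd hstoch' n ω).1 i j
    · exact fun n i j => (isStoch_leftProd hstoch' n ω).le_one i j
    · exact fun n i => (isStoch_leftProd hstoch' n ω).2 i
    · intro j
      refine monotone_nat_of_le_succ fun n => ?_
      show colMin (leftProd X n ω) j ≤ colMin (leftProd X (n + 1) ω) j
      have hstep : leftProd X (n + 1) ω = X (n + 1) ω * leftProd X n ω := rfl
      rw [hstep]
      exact colMin_mul_mono (hstoch' (n + 1) ω) _ j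
    · intro j
      refine antitone_nat_of_succ_le fun n => ?_
      show colMax (leftProd X (n + 1) ω) j ≤ colMax (leftProd X n ω) j
      have hstep : leftProd X (n + 1) ω = X (n + 1) ω * leftProd X n ω := rfl
      rw [hstep]
      exact colMax_mul_mono (hstoch' (n + 1) ω) _ j
    · intro N
      obtain ⟨k, hkN, hkE⟩ := frequently_atTop.1 hfreq N
      refine ⟨k * m, le_trans hkN (Nat.le_mul_of_pos_right k hm0), k * m + m, by omega, ?_⟩
      intro j
      have hrel : leftProd X (k * m + m) ω = Z k ω * leftProd X (k * m) ω :=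
        leftProd_add X (k * m) m ω
      show colMax (leftProd X (k * m + m) ω) j - colMin (leftProd X (k * m + m) ω) j
        ≤ (1 - (d : ℝ) * δ') *
          (colMax (leftProd X (k * m) ω) j - colMin (leftProd X (k * m) ω) j)
      rw [hrel]
      have hZstoch : IsStoch (Z k ω) := isStoch_pprod (fun t => hstoch' _ ω)
      have hZδ : ∀ i l, δ' ≤ Z k ω i l := fun i l =>
        le_trans (min_le_left _ _) (hkE i l)
      exact osc_mul_le hZstoch hZδ _ j
  refine ⟨fun ω => if h : ∃ w : Fin d → ℝ, w ∈ stdSimplex ℝ (Fin d) ∧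
      Tendsto (fun n => leftProd X n ω) atTop (nhds (Matrix.of fun _ j => w j))
    then h.choose else fun _ => 0, ?_, ?_⟩
  · filter_upwards [hmain] with ω hω
    rw [dif_pos hω]
    exact hω.choose_spec.1
  · filter_upwards [hmain] with ω hω
    rw [dif_pos hω]
    exact hω.choose_spec.2
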